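/- arXiv:1505.07612 — 2 statements merged into one kernel-verified Lean document; each statement's English description precedes it below -/
import Mathlib

section
/- Suppose h : [A,1) → ℝ is continuously differentiable, h(A) = 0, and for all x ∈ (A,1), λ h(x)(1−x) + (1/2) h'(x) ρ² x²(1−x)² + b − (aρ²/(2λ)) x² = 0, where A = √(2λb/(aρ²)) < 1. Then h(x) > 0 for all x ∈ (A,1). -/
/-- If `h` has a min on `Icc A x₀` at `c > A`, the derivative there is nonpositive. -/
lemma deriv_nonpos_of_min {h : ℝ → ℝ} {d A c x₀ : ℝ} (hAc : A < c) (hcx : c ≤ x₀)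
    (hmin : IsMinOn h (Set.Icc A x₀) c) (hd : HasDerivAt h d c) : d ≤ 0 := by
  have hy : A - c ∈ posTangentConeAt (Set.Icc A x₀) c := by
    apply sub_mem_posTangentConeAt_of_segment_subset
    rw [segment_symm, segment_eq_Icc hAc.le]
    exact Set.Icc_subset_Icc_right hcx
  have hfd : HasFDerivWithinAt h (ContinuousLinearMap.smulRight (1 : ℝ →L[ℝ] ℝ) d)
      (Set.Icc A x₀) c := hd.hasFDerivAt.hasFDerivWithinAt
  have := hmin.localize.hasFDerivWithinAt_nonneg hfd hy
  simp only [ContinuousLinearMap.smulRight_apply, ContinuousLinearMap.one_apply,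
    smul_eq_mul] at this
  nlinarith

/-- A `C¹` solution `h` of
`λ h(x)(1−x) + (1/2) h'(x) ρ² x²(1−x)² + b − (aρ²/(2λ)) x² = 0` on `(A,1)`
with `h(A) = 0`, where `A = √(2λb/(aρ²)) < 1`, is strictly positive on `(A,1)`. -/
theorem h_positive (a b lam ρ A : ℝ) (ha : 0 < a) (hb : 0 < b) (hlam : 0 < lam) (hρ : 0 < ρ)
    (hAdef : A = Real.sqrt (2 * lam * b / (a * ρ ^ 2))) (hA1 : A < 1)
    (h h' : ℝ → ℝ)
    (hderiv : ∀ x ∈ Set.Ioo A 1, HasDerivAt h (h' x) x)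
    (hcont : ContinuousOn h (Set.Ico A 1)) (hcont' : ContinuousOn h' (Set.Ioo A 1))
    (hode : ∀ x ∈ Set.Ioo A 1,
      lam * h x * (1 - x) + (1 / 2) * h' x * ρ ^ 2 * x ^ 2 * (1 - x) ^ 2 +
        b - a * ρ ^ 2 / (2 * lam) * x ^ 2 = 0)
    (hA0 : h A = 0) :
    ∀ x ∈ Set.Ioo A 1, 0 < h x := by
  have hA0' : 0 ≤ A := hAdef ▸ Real.sqrt_nonneg _
  have hAsq : a * ρ ^ 2 / (2 * lam) * A ^ 2 = b := by
    have harg : 0 ≤ 2 * lam * b / (a * ρ ^ 2) := by positivity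
    have : A ^ 2 = 2 * lam * b / (a * ρ ^ 2) := by
      rw [hAdef, Real.sq_sqrt harg]
    rw [this]
    field_simp
  -- key: at any point x ∈ (A,1) with h x ≤ 0, the derivative is positive
  have key : ∀ x ∈ Set.Ioo A 1, h x ≤ 0 → 0 < h' x := by
    intro x hx hhx
    obtain ⟨hxA, hx1⟩ := hx
    have hode' := hode x ⟨hxA, hx1⟩
    have hx0 : 0 < x := lt_of_le_of_lt hA0' hxA
    have hb' : b < a * ρ ^ 2 / (2 * lam) * x ^ 2 := by
      rw [← hAsq]
      have : A ^ 2 < x ^ 2 := by nlinarith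
      have hc : 0 < a * ρ ^ 2 / (2 * lam) := by positivity
      nlinarith
    have hcoef : 0 < (1 / 2) * ρ ^ 2 * x ^ 2 * (1 - x) ^ 2 := by
      have : 0 < 1 - x := by linarith
      positivity
    nlinarith [mul_nonneg (mul_nonneg hlam.le (neg_nonneg.2 hhx)) (by linarith : (0:ℝ) ≤ 1 - x)]
  intro x₀ hx₀
  obtain ⟨hx₀A, hx₀1⟩ := hx₀
  by_contra hle
  push_neg at hle
  -- minimize h on [A, x₀]
  have hsub : Set.Icc A x₀ ⊆ Set.Ico A 1 := fun y hy => ⟨hy.1, lt_of_le_of_lt hy.2 hx₀1⟩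
  obtain ⟨c, hc_mem, hc_min⟩ := IsCompact.exists_isMinOn isCompact_Icc
    (Set.nonempty_Icc.2 (le_of_lt hx₀A)) (hcont.mono hsub)
  have hcx₀ : h c ≤ h x₀ := hc_min ⟨le_of_lt hx₀A, le_refl x₀⟩
  -- find a min point c' with A < c' and h c' ≤ 0
  have main : ∀ c' ∈ Set.Icc A x₀, A < c' → IsMinOn h (Set.Icc A x₀) c' → h c' ≤ 0 → False := by
    intro c' hc'mem hAc' hmin hneg
    have hc'1 : c' < 1 := lt_of_le_of_lt hc'mem.2 hx₀1
    have hd := hderiv c' ⟨hAc', hc'1⟩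
    have h1 : 0 < h' c' := key c' ⟨hAc', hc'1⟩ hneg
    have h2 : h' c' ≤ 0 := deriv_nonpos_of_min hAc' hc'mem.2 hmin hd
    linarith
  rcases eq_or_lt_of_le hc_mem.1 with hcA | hcA
  · -- c = A, so min is 0, hence h x₀ = 0 and x₀ is also a min point
    have hc0 : h c = 0 := by rw [← hcA, hA0]
    have hx₀0 : h x₀ = 0 := le_antisymm hle (hc0 ▸ hcx₀)
    have hminx₀ : IsMinOn h (Set.Icc A x₀) x₀ := by
      intro y hy
      have := hc_min hy
      simp only [Set.mem_setOf_eq] at this ⊢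
      rw [hx₀0]; rw [hc0] at this; exact this
    exact main x₀ ⟨le_of_lt hx₀A, le_refl _⟩ hx₀A hminx₀ (le_of_eq hx₀0)
  · exact main c hc_mem hcA hc_min (le_trans hcx₀ hle)
end

section
/- Define f₂(x) = K₁ f(x) + f(x) ∫_A^x (−2/ρ²)·(ay+b)/(y²(1−y)²)·(1/f(y)) dy, where f(x) = ((1−x)/x)^α e^{α/x}, α = 2λ/ρ². Then f₂ solves the ODE λ f₂(x)(1−x) + a x + (1/2) f₂'(x) ρ² x²(1−x)² + b = 0 on (A,1). -/
/-- The variation-of-constants formula solves the inhomogeneous ODE on `(A,1)`. -/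
theorem f2_solves_ode (a b lam ρ A K₁ : ℝ) (ha : 0 < a) (hb : 0 < b)
    (hlam : 0 < lam) (hρ : 0 < ρ) (hA : A ∈ Set.Ioo (0:ℝ) 1)
    (α : ℝ) (hα : α = 2 * lam / ρ ^ 2)
    (f f₂ : ℝ → ℝ)
    (hf : ∀ x ∈ Set.Ioo (0:ℝ) 1, f x = ((1 - x) / x) ^ α * Real.exp (α / x))
    (hf₂ : ∀ x ∈ Set.Ioo (0:ℝ) 1, f₂ x = K₁ * f x +
      f x * ∫ y in A..x, (-2 / ρ ^ 2) * (a * y + b) / (y ^ 2 * (1 - y) ^ 2) * (1 / f y)) :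
    ∀ x ∈ Set.Ioo A 1,
      lam * f₂ x * (1 - x) + a * x + (1 / 2) * deriv f₂ x * ρ ^ 2 * x ^ 2 * (1 - x) ^ 2 + b
        = 0 := by
  obtain ⟨hA0, hA1⟩ := hA
  have hρ0 : ρ ≠ 0 := ne_of_gt hρ
  -- positivity of f on (0,1)
  have hfpos : ∀ y ∈ Set.Ioo (0:ℝ) 1, 0 < f y := by
    intro y hy
    obtain ⟨hy0, hy1⟩ := hy
    rw [hf y ⟨hy0, hy1⟩]
    have hu : 0 < (1 - y) / y := div_pos (by linarith) hy0
    positivity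
  -- continuity of f on (0,1)
  have hfcont : ContinuousOn f (Set.Ioo (0:ℝ) 1) := by
    have hc : ContinuousOn (fun y => ((1 - y) / y) ^ α * Real.exp (α / y))
        (Set.Ioo (0:ℝ) 1) := by
      apply ContinuousOn.mul
      · apply ContinuousOn.rpow_const
        · exact (continuousOn_const.sub continuousOn_id).div continuousOn_id
            (fun y hy => ne_of_gt hy.1)
        · intro y hy
          exact Or.inl (ne_of_gt (div_pos (by linarith [hy.2]) hy.1))
      · exact Real.continuous_exp.comp_continuousOn
          (continuousOn_const.div continuousOn_id (fun y hy => ne_of_gt hy.1))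
    exact hc.congr (fun y hy => hf y hy)
  -- derivative of f on (0,1)
  have hfderiv : ∀ y ∈ Set.Ioo (0:ℝ) 1,
      HasDerivAt f (f y * (-α / (y ^ 2 * (1 - y)))) y := by
    intro y hy
    obtain ⟨hy0, hy1⟩ := hy
    have hy0' : y ≠ 0 := ne_of_gt hy0
    have h1y : (0:ℝ) < 1 - y := by linarith
    have h1y' : (1:ℝ) - y ≠ 0 := ne_of_gt h1y
    have hu : 0 < (1 - y) / y := div_pos h1y hy0
    have hEq : f =ᶠ[nhds y] fun z => Real.exp (Real.log ((1 - z) / z) * α + α / z) := by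
      filter_upwards [isOpen_Ioo.mem_nhds (⟨hy0, hy1⟩ : y ∈ Set.Ioo (0:ℝ) 1)] with z hz
      rw [hf z hz, Real.rpow_def_of_pos (div_pos (by linarith [hz.2]) hz.1), ← Real.exp_add]
    have hu' : HasDerivAt (fun z => (1 - z) / z) ((-1 * y - (1 - y) * 1) / y ^ 2) y := by
      have h1 : HasDerivAt (fun z => 1 - z) (-1) y := by
        simpa using (hasDerivAt_id y).const_sub 1
      exact h1.div (hasDerivAt_id y) hy0'
    have hlog : HasDerivAt (fun z => Real.log ((1 - z) / z))
        (((-1 * y - (1 - y) * 1) / y ^ 2) / ((1 - y) / y)) y := hu'.log (ne_of_gt hu)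
    have hinv : HasDerivAt (fun z => α / z) (α * (-(y ^ 2)⁻¹)) y := by
      simpa [div_eq_mul_inv] using (hasDerivAt_inv hy0').const_mul α
    have hψ : HasDerivAt (fun z => Real.log ((1 - z) / z) * α + α / z)
        ((((-1 * y - (1 - y) * 1) / y ^ 2) / ((1 - y) / y)) * α + α * (-(y ^ 2)⁻¹)) y :=
      (hlog.mul_const α).add hinv
    have hφ := hψ.exp
    have hd := hφ.congr_of_eventuallyEq hEq
    have hfy : f y = Real.exp (Real.log ((1 - y) / y) * α + α / y) := by
      rw [hf y ⟨hy0, hy1⟩, Real.rpow_def_of_pos hu, ← Real.exp_add]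
    refine hd.congr_deriv ?_
    rw [hfy]
    congr 1
    field_simp
    ring
  intro x hx
  obtain ⟨hAx, hx1⟩ := hx
  have hx0 : 0 < x := hA0.trans hAx
  have hx01 : x ∈ Set.Ioo (0:ℝ) 1 := ⟨hx0, hx1⟩
  set h : ℝ → ℝ := fun y => -2 / ρ ^ 2 * (a * y + b) / (y ^ 2 * (1 - y) ^ 2) * (1 / f y)
    with hh
  have hcontH : ContinuousOn h (Set.Ioo (0:ℝ) 1) := by
    apply ContinuousOn.mul
    · apply ContinuousOn.div
      · exact continuousOn_const.mul (by fun_prop)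
      · fun_prop
      · intro y hy
        have : (0:ℝ) < y ^ 2 * (1 - y) ^ 2 :=
          mul_pos (pow_pos hy.1 2) (pow_pos (by linarith [hy.2]) 2)
        exact this.ne'
    · exact continuousOn_const.div hfcont (fun y hy => ne_of_gt (hfpos y hy))
  have hsub : Set.uIcc A x ⊆ Set.Ioo (0:ℝ) 1 := by
    rw [Set.uIcc_of_le hAx.le]
    intro y hy
    exact ⟨hA0.trans_le hy.1, lt_of_le_of_lt hy.2 hx1⟩
  have hint : IntervalIntegrable h MeasureTheory.volume A x :=
    (hcontH.mono hsub).intervalIntegrable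
  have hFTC : HasDerivAt (fun t => ∫ y in A..t, h y) (h x) x :=
    intervalIntegral.integral_hasDerivAt_right hint
      (hcontH.stronglyMeasurableAtFilter isOpen_Ioo x hx01)
      (hcontH.continuousAt (isOpen_Ioo.mem_nhds hx01))
  have hfd := hfderiv x hx01
  have hprod : HasDerivAt (fun t => K₁ * f t + f t * ∫ y in A..t, h y)
      (K₁ * (f x * (-α / (x ^ 2 * (1 - x)))) +
        ((f x * (-α / (x ^ 2 * (1 - x)))) * (∫ y in A..x, h y) + f x * h x)) x :=
    (hfd.const_mul K₁).add (hfd.mul hFTC)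
  have hEq2 : f₂ =ᶠ[nhds x] fun t => K₁ * f t + f t * ∫ y in A..t, h y := by
    filter_upwards [isOpen_Ioo.mem_nhds hx01] with z hz
    exact hf₂ z hz
  have hd2 : deriv f₂ x = K₁ * (f x * (-α / (x ^ 2 * (1 - x)))) +
      ((f x * (-α / (x ^ 2 * (1 - x)))) * (∫ y in A..x, h y) + f x * h x) := by
    rw [hEq2.deriv_eq]
    exact hprod.deriv
  have hfx : (0:ℝ) < f x := hfpos x hx01
  have hfx' : f x ≠ 0 := ne_of_gt hfx
  have hx0' : x ≠ 0 := ne_of_gt hx0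
  have h1x : (0:ℝ) < 1 - x := by linarith
  have h1x' : (1:ℝ) - x ≠ 0 := ne_of_gt h1x
  rw [hf₂ x hx01, hd2, hh]
  simp only
  subst hα
  field_simp
  ring
end
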